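/- arXiv:1806.07190 — 5 statements merged into one kernel-verified Lean document; each statement's English description precedes it below -/
import Mathlib

section
/- Under the stated hypotheses, for every ε with 0 < ε < min{k_{p1}/h₂, h₁/h₂}, the Lyapunov candidate V is positive definite and radially unbounded: V(0, 0) = 0, V(ė, e) > 0 for all (ė, e) ≠ (0, 0), and for every M ∈ ℝ there exists R > 0 such that V(ė, e) > M whenever ‖ė‖² + ‖e‖² > R². -/
open Matrix

/-- The Lyapunov candidate `V(ė, e)` from the paper, with the line integral
parametrized along the straight path from `0` to `e`. -/
noncomputable def lyapV (n : ℕ)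
    (H Kp : EuclideanSpace ℝ (Fin n) → Matrix (Fin n) (Fin n) ℝ)
    (qd : EuclideanSpace ℝ (Fin n)) (ε : ℝ)
    (ed e : EuclideanSpace ℝ (Fin n)) : ℝ :=
  (1 / 2) * (ed ⬝ᵥ (H (qd + e)).mulVec ed)
    + (∫ t in (0:ℝ)..1, t * (e ⬝ᵥ (Kp (t • e + qd)).mulVec e))
    + ε * (e ⬝ᵥ (H (qd + e)).mulVec ed)

/-- Auxiliary quadratic lower bound on the Lyapunov candidate. -/
theorem lyapV_lower_aux (n : ℕ)
    (H Kp : EuclideanSpace ℝ (Fin n) → Matrix (Fin n) (Fin n) ℝ)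
    (hKcont : Continuous Kp)
    (hHsymm : ∀ q, (H q).IsSymm)
    (h1 h2 kp1 : ℝ)
    (hh1 : 0 < h1) (hh2 : 0 < h2)
    (hHlow : ∀ q x : EuclideanSpace ℝ (Fin n), h1 * ‖x‖ ^ 2 ≤ x ⬝ᵥ (H q).mulVec x)
    (hHup : ∀ q x : EuclideanSpace ℝ (Fin n), x ⬝ᵥ (H q).mulVec x ≤ h2 * ‖x‖ ^ 2)
    (hKlow : ∀ q x : EuclideanSpace ℝ (Fin n), kp1 * ‖x‖ ^ 2 ≤ x ⬝ᵥ (Kp q).mulVec x)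
    (qd : EuclideanSpace ℝ (Fin n)) (ε : ℝ)
    (hε : 0 < ε) (hεlt : ε < min (kp1 / h2) (h1 / h2))
    (ed e : EuclideanSpace ℝ (Fin n)) :
    (1/2) * min (h1 - ε*h2) (kp1 - ε*h2) * (‖ed‖^2 + ‖e‖^2)
      ≤ lyapV n H Kp qd ε ed e := by
  unfold lyapV
  set q := qd + e with hq
  have hsym : e ⬝ᵥ (H q).mulVec ed = ed ⬝ᵥ (H q).mulVec e := by
    rw [Matrix.dotProduct_mulVec, ← Matrix.mulVec_transpose, (hHsymm q).eq, dotProduct_comm]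
  have hexp : ((e + ed : EuclideanSpace ℝ (Fin n))) ⬝ᵥ (H q).mulVec (e + ed)
      = e ⬝ᵥ (H q).mulVec e + 2 * (e ⬝ᵥ (H q).mulVec ed) + ed ⬝ᵥ (H q).mulVec ed := by
    show ((e:Fin n → ℝ) + (ed:Fin n → ℝ)) ⬝ᵥ (H q).mulVec ((e:Fin n → ℝ) + (ed:Fin n → ℝ)) = _
    rw [Matrix.mulVec_add, add_dotProduct, dotProduct_add, dotProduct_add]
    rw [← hsym]; ring
  have hpos : (0:ℝ) ≤ (e + ed : EuclideanSpace ℝ (Fin n)) ⬝ᵥ (H q).mulVec (e + ed) :=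
    le_trans (by positivity) (hHlow q (e + ed))
  have hcross : -(1/2) * (e ⬝ᵥ (H q).mulVec e + ed ⬝ᵥ (H q).mulVec ed) ≤ e ⬝ᵥ (H q).mulVec ed := by
    nlinarith [hpos, hexp]
  have hcross2 : -(1/2) * (h2 * ‖e‖^2 + h2 * ‖ed‖^2) ≤ e ⬝ᵥ (H q).mulVec ed := by
    have := hHup q e; have := hHup q ed
    nlinarith
  have hcont : Continuous (fun t : ℝ => t * (e ⬝ᵥ (Kp (t • e + qd)).mulVec e)) := by
    refine continuous_id.mul (Continuous.dotProduct continuous_const ?_)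
    exact Continuous.matrix_mulVec (hKcont.comp (by fun_prop)) continuous_const
  have hintge : kp1 * ‖e‖^2 * (1/2) ≤ ∫ t in (0:ℝ)..1, t * (e ⬝ᵥ (Kp (t • e + qd)).mulVec e) := by
    have h1le : (∫ t in (0:ℝ)..1, t * (kp1 * ‖e‖^2))
        ≤ ∫ t in (0:ℝ)..1, t * (e ⬝ᵥ (Kp (t • e + qd)).mulVec e) := by
      apply intervalIntegral.integral_mono_on (by norm_num)
      · exact (continuous_id.mul continuous_const).intervalIntegrable _ _
      · exact hcont.intervalIntegrable _ _
      · intro t ht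
        exact mul_le_mul_of_nonneg_left (hKlow _ e) ht.1
    calc kp1 * ‖e‖^2 * (1/2) = ∫ t in (0:ℝ)..1, t * (kp1 * ‖e‖^2) := by
          rw [intervalIntegral.integral_mul_const, integral_id]; ring
      _ ≤ _ := h1le
  have hHed := hHlow q ed
  have hεh2 : ε * h2 < kp1 ∧ ε * h2 < h1 := by
    constructor
    · have := lt_of_lt_of_le hεlt (min_le_left _ _)
      calc ε * h2 < (kp1/h2) * h2 := by nlinarith
        _ = kp1 := by field_simp
    · have := lt_of_lt_of_le hεlt (min_le_right _ _)
      calc ε * h2 < (h1/h2) * h2 := by nlinarith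
        _ = h1 := by field_simp
  have hmin1 : min (h1 - ε*h2) (kp1 - ε*h2) ≤ h1 - ε*h2 := min_le_left _ _
  have hmin2 : min (h1 - ε*h2) (kp1 - ε*h2) ≤ kp1 - ε*h2 := min_le_right _ _
  nlinarith [hcross2, hintge, hHed, sq_nonneg ‖e‖, sq_nonneg ‖ed‖]

theorem stmt_5 (n : ℕ) (hn : 1 ≤ n)
    (H Kp : EuclideanSpace ℝ (Fin n) → Matrix (Fin n) (Fin n) ℝ)
    (hHcont : Continuous H) (hKcont : Continuous Kp)
    (hHsymm : ∀ q, (H q).IsSymm) (hKsymm : ∀ q, (Kp q).IsSymm)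
    (h1 h2 kp1 kp2 : ℝ)
    (hh1 : 0 < h1) (hh2 : 0 < h2) (hkp1 : 0 < kp1) (hkp2 : 0 < kp2)
    (hHlow : ∀ q x : EuclideanSpace ℝ (Fin n), h1 * ‖x‖ ^ 2 ≤ x ⬝ᵥ (H q).mulVec x)
    (hHup : ∀ q x : EuclideanSpace ℝ (Fin n), x ⬝ᵥ (H q).mulVec x ≤ h2 * ‖x‖ ^ 2)
    (hKlow : ∀ q x : EuclideanSpace ℝ (Fin n), kp1 * ‖x‖ ^ 2 ≤ x ⬝ᵥ (Kp q).mulVec x)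
    (hKup : ∀ q x : EuclideanSpace ℝ (Fin n), x ⬝ᵥ (Kp q).mulVec x ≤ kp2 * ‖x‖ ^ 2)
    (qd : EuclideanSpace ℝ (Fin n)) (ε : ℝ)
    (hε : 0 < ε) (hεlt : ε < min (kp1 / h2) (h1 / h2)) :
    lyapV n H Kp qd ε 0 0 = 0 ∧
    (∀ ed e : EuclideanSpace ℝ (Fin n), (ed, e) ≠ (0, 0) → 0 < lyapV n H Kp qd ε ed e) ∧
    (∀ M : ℝ, ∃ R > (0:ℝ), ∀ ed e : EuclideanSpace ℝ (Fin n),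
      ‖ed‖ ^ 2 + ‖e‖ ^ 2 > R ^ 2 → lyapV n H Kp qd ε ed e > M) := by
  have hεh2 : ε * h2 < kp1 ∧ ε * h2 < h1 := by
    constructor
    · have := lt_of_lt_of_le hεlt (min_le_left _ _)
      calc ε * h2 < (kp1/h2) * h2 := by nlinarith
        _ = kp1 := by field_simp
    · have := lt_of_lt_of_le hεlt (min_le_right _ _)
      calc ε * h2 < (h1/h2) * h2 := by nlinarith
        _ = h1 := by field_simp
  set c : ℝ := (1/2) * min (h1 - ε*h2) (kp1 - ε*h2) with hc
  have hcpos : 0 < c := by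
    have := lt_min (by linarith [hεh2.2] : (0:ℝ) < h1 - ε*h2)
      (by linarith [hεh2.1] : (0:ℝ) < kp1 - ε*h2)
    positivity
  have hlow : ∀ ed e : EuclideanSpace ℝ (Fin n),
      c * (‖ed‖^2 + ‖e‖^2) ≤ lyapV n H Kp qd ε ed e := fun ed e =>
    lyapV_lower_aux n H Kp hKcont hHsymm h1 h2 kp1 hh1 hh2 hHlow hHup hKlow qd ε hε hεlt ed e
  refine ⟨?_, ?_, ?_⟩
  · have h0 : ((0 : EuclideanSpace ℝ (Fin n)) : Fin n → ℝ) = 0 := rfl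
    simp [lyapV, h0]
  · intro ed e hne
    have hpos : 0 < ‖ed‖^2 + ‖e‖^2 := by
      rcases eq_or_ne ed 0 with h1' | h1'
      · rcases eq_or_ne e 0 with h2' | h2'
        · exact absurd (by rw [h1', h2']) hne
        · have := norm_pos_iff.mpr h2'; positivity
      · have := norm_pos_iff.mpr h1'; positivity
    calc (0:ℝ) < c * (‖ed‖^2 + ‖e‖^2) := by positivity
      _ ≤ _ := hlow ed e
  · intro M
    refine ⟨Real.sqrt (max (M/c) 0) + 1, by positivity, fun ed e hs => ?_⟩
    have hx : (0:ℝ) ≤ max (M/c) 0 := le_max_right _ _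
    have hsq : Real.sqrt (max (M/c) 0) ^ 2 = max (M/c) 0 := Real.sq_sqrt hx
    have hR2 : (Real.sqrt (max (M/c) 0) + 1)^2 ≥ M/c := by
      nlinarith [Real.sqrt_nonneg (max (M/c) 0), le_max_left (M/c) 0]
    have hgt : ‖ed‖^2 + ‖e‖^2 > M/c := lt_of_le_of_lt hR2 hs
    calc M = c * (M/c) := by field_simp
      _ < c * (‖ed‖^2 + ‖e‖^2) := by nlinarith
      _ ≤ _ := hlow ed e
end

section
/- For all real symmetric positive definite n×n matrices K_d, K_p, Ĥ and every real n×n matrix Ĉ, there exists ε > 0 such that the symmetric 2n×2n block matrix M with blocks M₁₁ = −K_d + εĤ, M₁₂ = (ε/2)(−K_dᵀ + Ĉ), M₂₁ = (ε/2)(−K_d + Ĉᵀ), M₂₂ = −εK_p is negative definite, i.e. xᵀMx < 0 for all nonzero x ∈ ℝ^{2n}. -/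
open Matrix

lemma dp_self_nonneg {n : ℕ} (v : Fin n → ℝ) : 0 ≤ v ⬝ᵥ v :=
  Finset.sum_nonneg fun _ _ => mul_self_nonneg _

lemma dp_self_pos {n : ℕ} {v : Fin n → ℝ} (hv : v ≠ 0) : 0 < v ⬝ᵥ v :=
  lt_of_le_of_ne (dp_self_nonneg v) (fun h => hv (dotProduct_self_eq_zero.mp h.symm))

lemma posdef_lower {n : ℕ} (hn : 1 ≤ n) (A : Matrix (Fin n) (Fin n) ℝ) (hA : A.PosDef) :
    ∃ a > (0:ℝ), ∀ x : Fin n → ℝ, a * (x ⬝ᵥ x) ≤ x ⬝ᵥ A *ᵥ x := by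
  classical
  have hpos : ∀ x : Fin n → ℝ, x ≠ 0 → 0 < x ⬝ᵥ A *ᵥ x := by
    intro x hx
    simpa using hA.dotProduct_mulVec_pos hx
  set E := EuclideanSpace ℝ (Fin n) with hE
  let f : E → ℝ := fun x => (x : Fin n → ℝ) ⬝ᵥ A *ᵥ (x : Fin n → ℝ)
  have hf : Continuous f := by
    have : f = fun x : E => ∑ i, (x : Fin n → ℝ) i * ∑ j, A i j * (x : Fin n → ℝ) j := by
      funext x; simp [f, dotProduct, mulVec]
    rw [this]
    exact continuous_finset_sum _ fun i _ =>
      ((EuclideanSpace.proj i).continuous).mul <|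
        continuous_finset_sum _ fun j _ => continuous_const.mul (EuclideanSpace.proj j).continuous
  have hne : (Metric.sphere (0:E) 1).Nonempty := by
    refine ⟨EuclideanSpace.single ⟨0, hn⟩ (1:ℝ), ?_⟩
    rw [mem_sphere_zero_iff_norm, EuclideanSpace.norm_single]
    norm_num
  obtain ⟨z, hz, hmin⟩ := (isCompact_sphere (0:E) 1).exists_isMinOn hne hf.continuousOn
  have hz1 : ‖z‖ = 1 := by simpa using hz
  have hzne : (z : Fin n → ℝ) ≠ 0 := by
    intro h
    have : z = 0 := by simpa using h
    rw [this] at hz1; simp at hz1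
  refine ⟨f z, hpos _ hzne, ?_⟩
  intro x
  by_cases hx : x = 0
  · simp [hx, f]
  · set X : E := WithLp.toLp 2 x with hXdef
    have hX : X ≠ 0 := fun h => hx (by have := congrArg WithLp.ofLp h; simpa [hXdef] using this)
    have hc : 0 < ‖X‖ := norm_pos_iff.mpr hX
    set c : ℝ := ‖X‖ with hcdef
    have hmem : (c⁻¹ • X) ∈ Metric.sphere (0:E) 1 := by
      rw [mem_sphere_zero_iff_norm, norm_smul, Real.norm_eq_abs,
        abs_of_pos (inv_pos.mpr hc), ← hcdef, inv_mul_cancel₀ hc.ne']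
    have hfu := hmin hmem
    have hval : f (c⁻¹ • X) = c⁻¹ * (c⁻¹ * (x ⬝ᵥ A *ᵥ x)) := by
      show (c⁻¹ • x) ⬝ᵥ A *ᵥ (c⁻¹ • x) = _
      rw [smul_dotProduct, mulVec_smul, dotProduct_smul]
      simp [mul_assoc]
    have hc2 : c * c = x ⬝ᵥ x := by
      have h1 : c = Real.sqrt (∑ i, ‖x i‖^2) := EuclideanSpace.norm_eq X
      rw [h1, Real.mul_self_sqrt (by positivity)]
      simp [dotProduct, pow_two, Real.norm_eq_abs, abs_mul_abs_self]
    have : f z ≤ c⁻¹ * (c⁻¹ * (x ⬝ᵥ A *ᵥ x)) := by rw [← hval]; exact hfu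
    calc f z * (x ⬝ᵥ x) = f z * (c * c) := by rw [hc2]
      _ ≤ (c⁻¹ * (c⁻¹ * (x ⬝ᵥ A *ᵥ x))) * (c * c) := by
          apply mul_le_mul_of_nonneg_right this (by positivity)
      _ = x ⬝ᵥ A *ᵥ x := by field_simp

lemma entry_sq_le {n : ℕ} (x : Fin n → ℝ) (i : Fin n) : x i * x i ≤ x ⬝ᵥ x :=
  Finset.single_le_sum (fun j _ => mul_self_nonneg (x j)) (Finset.mem_univ i)

lemma dot_mulVec_le {n : ℕ} (A : Matrix (Fin n) (Fin n) ℝ) (x y : Fin n → ℝ)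
    (t : ℝ) (ht : 0 < t) :
    x ⬝ᵥ A *ᵥ y ≤ (∑ i, ∑ j, |A i j|) * (t * (x ⬝ᵥ x) + t⁻¹ * (y ⬝ᵥ y)) / 2 := by
  have hxx : 0 ≤ x ⬝ᵥ x := Finset.sum_nonneg fun _ _ => mul_self_nonneg _
  have hyy : 0 ≤ y ⬝ᵥ y := Finset.sum_nonneg fun _ _ => mul_self_nonneg _
  calc x ⬝ᵥ A *ᵥ y = ∑ i, ∑ j, x i * (A i j * y j) := by
        simp [dotProduct, mulVec, Finset.mul_sum]
    _ ≤ ∑ i, ∑ j, |A i j| * ((t * (x ⬝ᵥ x) + t⁻¹ * (y ⬝ᵥ y)) / 2) := by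
        refine Finset.sum_le_sum fun i _ => Finset.sum_le_sum fun j _ => ?_
        have h1 : x i * (A i j * y j) ≤ |A i j| * ((t * (x i * x i) + t⁻¹ * (y j * y j)) / 2) := by
          have h2 : x i * (A i j * y j) ≤ |A i j| * |x i * y j| := by
            calc x i * (A i j * y j) ≤ |x i * (A i j * y j)| := le_abs_self _
              _ = |A i j| * |x i * y j| := by rw [abs_mul, abs_mul, abs_mul]; ring
          refine h2.trans (mul_le_mul_of_nonneg_left ?_ (abs_nonneg _))
          have hinv : t⁻¹ * t = 1 := inv_mul_cancel₀ ht.ne'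
          have hip : 0 < t⁻¹ := inv_pos.mpr ht
          rw [abs_mul]
          rcases abs_cases (x i) with ⟨hx1, _⟩ | ⟨hx1, _⟩ <;>
            rcases abs_cases (y j) with ⟨hy1, _⟩ | ⟨hy1, _⟩ <;>
            rw [hx1, hy1] <;>
            nlinarith [sq_nonneg (t * x i - y j), sq_nonneg (t * x i + y j),
              mul_pos ht ht, mul_pos hip ht]
        refine h1.trans (mul_le_mul_of_nonneg_left ?_ (abs_nonneg _))
        have h3 : t * (x i * x i) ≤ t * (x ⬝ᵥ x) :=
          mul_le_mul_of_nonneg_left (entry_sq_le x i) ht.le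
        have h4 : t⁻¹ * (y j * y j) ≤ t⁻¹ * (y ⬝ᵥ y) :=
          mul_le_mul_of_nonneg_left (entry_sq_le y j) (inv_pos.mpr ht).le
        linarith
    _ = (∑ i, ∑ j, |A i j|) * (t * (x ⬝ᵥ x) + t⁻¹ * (y ⬝ᵥ y)) / 2 := by
        rw [mul_div_assoc, Finset.sum_mul]
        exact Finset.sum_congr rfl fun i _ => (Finset.sum_mul _ _ _).symm

theorem stmt_9 (n : ℕ) (hn : 1 ≤ n)
    (Kd Kp Hh Ch : Matrix (Fin n) (Fin n) ℝ)
    (hKd : Kd.PosDef) (hKp : Kp.PosDef) (hHh : Hh.PosDef) :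
    ∃ ε > (0:ℝ), ∀ x : (Fin n ⊕ Fin n) → ℝ, x ≠ 0 →
      x ⬝ᵥ (Matrix.fromBlocks (-Kd + ε • Hh) ((ε / 2) • (-Kdᵀ + Ch))
        ((ε / 2) • (-Kd + Chᵀ)) (-(ε • Kp))).mulVec x < 0 := by
  classical
  obtain ⟨a, ha, hKdl⟩ := posdef_lower hn Kd hKd
  obtain ⟨c, hc, hKpl⟩ := posdef_lower hn Kp hKp
  set B1 : Matrix (Fin n) (Fin n) ℝ := -Kdᵀ + Ch with hB1
  set B2 : Matrix (Fin n) (Fin n) ℝ := -Kd + Chᵀ with hB2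
  obtain ⟨S1, hS1⟩ : ∃ s : ℝ, s = ∑ i, ∑ j, |B1 i j| := ⟨_, rfl⟩
  obtain ⟨S2, hS2⟩ : ∃ s : ℝ, s = ∑ i, ∑ j, |B2 i j| := ⟨_, rfl⟩
  obtain ⟨SH, hSH⟩ : ∃ s : ℝ, s = ∑ i, ∑ j, |Hh i j| := ⟨_, rfl⟩
  have hS1n : 0 ≤ S1 := by
    rw [hS1]; exact Finset.sum_nonneg fun _ _ => Finset.sum_nonneg fun _ _ => abs_nonneg _
  have hS2n : 0 ≤ S2 := by
    rw [hS2]; exact Finset.sum_nonneg fun _ _ => Finset.sum_nonneg fun _ _ => abs_nonneg _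
  have hSHn : 0 ≤ SH := by
    rw [hSH]; exact Finset.sum_nonneg fun _ _ => Finset.sum_nonneg fun _ _ => abs_nonneg _
  obtain ⟨t, ht_def⟩ : ∃ u : ℝ, u = (S1 + S2 + 1) / c := ⟨_, rfl⟩
  have ht : 0 < t := by
    rw [ht_def]; exact div_pos (by linarith) hc
  have hti : t⁻¹ * (S1 + S2 + 1) = c := by
    rw [ht_def]
    field_simp
  obtain ⟨D, hD_def⟩ : ∃ d : ℝ, d = 2 * (SH + (S1 + S2) * t / 4 + 1) := ⟨_, rfl⟩
  have h4 : 0 ≤ (S1 + S2) * t / 4 := by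
    have := mul_nonneg (by linarith : (0:ℝ) ≤ S1 + S2) ht.le
    linarith
  have hD : 0 < D := by rw [hD_def]; linarith
  obtain ⟨ε, hε_def⟩ : ∃ e : ℝ, e = min 1 (a / D) := ⟨_, rfl⟩
  have hε : 0 < ε := by
    rw [hε_def]; exact lt_min one_pos (div_pos ha hD)
  have hεD : ε * D ≤ a := by
    have h1 : ε ≤ a / D := hε_def ▸ min_le_right _ _
    calc ε * D ≤ (a / D) * D := mul_le_mul_of_nonneg_right h1 hD.le
      _ = a := div_mul_cancel₀ a hD.ne'
  refine ⟨ε, hε, ?_⟩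
  intro x hx
  set x1 : Fin n → ℝ := x ∘ Sum.inl with hx1
  set x2 : Fin n → ℝ := x ∘ Sum.inr with hx2
  obtain ⟨p, hp_def⟩ : ∃ r : ℝ, r = x1 ⬝ᵥ x1 := ⟨_, rfl⟩
  obtain ⟨q, hq_def⟩ : ∃ r : ℝ, r = x2 ⬝ᵥ x2 := ⟨_, rfl⟩
  have hp0 : 0 ≤ p := hp_def ▸ dp_self_nonneg x1
  have hq0 : 0 ≤ q := hq_def ▸ dp_self_nonneg x2
  have hpq : 0 < p ∨ 0 < q := by
    by_contra h
    push_neg at h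
    have h1 : x1 = 0 := by
      by_contra h1
      exact absurd (hp_def ▸ dp_self_pos h1) (not_lt.mpr h.1)
    have h2 : x2 = 0 := by
      by_contra h2
      exact absurd (hq_def ▸ dp_self_pos h2) (not_lt.mpr h.2)
    apply hx
    funext i
    cases i with
    | inl i => exact congrFun h1 i
    | inr i => exact congrFun h2 i
  have hxelim : x = Sum.elim x1 x2 := funext fun i => by cases i <;> rfl
  rw [hxelim, fromBlocks_mulVec, sumElim_dotProduct_sumElim]
  simp only [Sum.elim_comp_inl, Sum.elim_comp_inr, dotProduct_add, add_mulVec, neg_mulVec, smul_mulVec, dotProduct_neg,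
    dotProduct_smul, smul_eq_mul]
  -- bounds
  have hA1 : a * p ≤ x1 ⬝ᵥ Kd *ᵥ x1 := hp_def ▸ hKdl x1
  have hP2 : c * q ≤ x2 ⬝ᵥ Kp *ᵥ x2 := hq_def ▸ hKpl x2
  have hH' : x1 ⬝ᵥ Hh *ᵥ x1 ≤ SH * p := by
    calc x1 ⬝ᵥ Hh *ᵥ x1 ≤ (∑ i, ∑ j, |Hh i j|) * (1 * (x1 ⬝ᵥ x1) + 1⁻¹ * (x1 ⬝ᵥ x1)) / 2 :=
          dot_mulVec_le Hh x1 x1 1 one_pos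
      _ = SH * p := by rw [inv_one, ← hSH, ← hp_def]; ring
  have hC1 : x1 ⬝ᵥ B1 *ᵥ x2 ≤ S1 * (t * p + t⁻¹ * q) / 2 := by
    have h := dot_mulVec_le B1 x1 x2 t ht
    rw [← hS1, ← hp_def, ← hq_def] at h
    exact h
  have hC2 : x2 ⬝ᵥ B2 *ᵥ x1 ≤ S2 * (t * p + t⁻¹ * q) / 2 := by
    have h := dot_mulVec_le B2 x2 x1 t⁻¹ (inv_pos.mpr ht)
    rw [inv_inv, ← hS2, ← hp_def, ← hq_def] at h
    calc x2 ⬝ᵥ B2 *ᵥ x1 ≤ S2 * (t⁻¹ * q + t * p) / 2 := h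
      _ = S2 * (t * p + t⁻¹ * q) / 2 := by ring
  -- multiply bounds by ε's
  have m2 : ε * (x1 ⬝ᵥ Hh *ᵥ x1) ≤ ε * (SH * p) := mul_le_mul_of_nonneg_left hH' hε.le
  have m3 : ε / 2 * (x1 ⬝ᵥ B1 *ᵥ x2) ≤ ε / 2 * (S1 * (t * p + t⁻¹ * q) / 2) :=
    mul_le_mul_of_nonneg_left hC1 (by linarith)
  have m4 : ε / 2 * (x2 ⬝ᵥ B2 *ᵥ x1) ≤ ε / 2 * (S2 * (t * p + t⁻¹ * q) / 2) :=
    mul_le_mul_of_nonneg_left hC2 (by linarith)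
  have m5 : ε * (c * q) ≤ ε * (x2 ⬝ᵥ Kp *ᵥ x2) := mul_le_mul_of_nonneg_left hP2 hε.le
  -- coefficient bounds
  have hεDexp : ε * D = 2 * (ε * SH + ε * ((S1 + S2) * t) / 4 + ε) := by rw [hD_def]; ring
  have hα : ε * SH + ε * ((S1 + S2) * t) / 4 ≤ a / 2 := by
    have h := hεD
    rw [hεDexp] at h
    linarith
  have hb1 : (S1 + S2) * t⁻¹ ≤ c := by
    have h0 : 0 ≤ t⁻¹ := (inv_pos.mpr ht).le
    have he : (S1 + S2) * t⁻¹ = t⁻¹ * (S1 + S2 + 1) - t⁻¹ := by ring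
    rw [he, hti]
    linarith
  have hβ : ε * ((S1 + S2) * t⁻¹) / 4 ≤ ε * c / 4 := by
    have := mul_le_mul_of_nonneg_left hb1 hε.le
    linarith
  have step2 : (ε * SH + ε * ((S1 + S2) * t) / 4) * p ≤ (a / 2) * p :=
    mul_le_mul_of_nonneg_right hα hp0
  have step3 : (ε * ((S1 + S2) * t⁻¹) / 4) * q ≤ (ε * c / 4) * q :=
    mul_le_mul_of_nonneg_right hβ hq0
  have hfin1 : 0 ≤ (ε * c) * q := mul_nonneg (mul_nonneg hε.le hc.le) hq0
  have hfin2 : 0 ≤ (a / 2) * p := mul_nonneg (by linarith) hp0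
  rcases hpq with hp | hq
  · have hsp : 0 < (a / 2) * p := mul_pos (by linarith) hp
    linarith [m2, m3, m4, m5, hA1, step2, step3, hfin1, hfin2, hsp]
  · have hsq : 0 < (ε * c) * q := mul_pos (mul_pos hε hc) hq
    linarith [m2, m3, m4, m5, hA1, step2, step3, hfin1, hfin2, hsq]
end

section
/- For all real symmetric positive definite n×n matrices K_d, K_p, Ĥ and every real n×n matrix Ĉ, there exists ε₀ > 0 such that for every ε with 0 < ε < ε₀: the matrix K_d − εĤ is positive definite (hence invertible), and the Schur complement S = −εK_p + (ε²/4)(K_d − Ĉᵀ)(K_d − εĤ)⁻¹(K_dᵀ − Ĉ) is negative definite, i.e. xᵀSx < 0 for all nonzero x ∈ ℝⁿ. -/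
open Matrix Finset

lemma dot_sq_le (n : ℕ) (x y : Fin n → ℝ) :
    (x ⬝ᵥ y) ^ 2 ≤ (x ⬝ᵥ x) * (y ⬝ᵥ y) := by
  simpa [dotProduct, sq] using Finset.sum_mul_sq_le_sq_mul_sq Finset.univ x y

lemma dot_self_nonneg (n : ℕ) (x : Fin n → ℝ) : 0 ≤ x ⬝ᵥ x :=
  Finset.sum_nonneg fun _ _ => mul_self_nonneg _

lemma quad_coercive {n : ℕ} (hn : 1 ≤ n) {A : Matrix (Fin n) (Fin n) ℝ} (hA : A.PosDef) :
    ∃ c > (0:ℝ), ∀ x : Fin n → ℝ, c * (x ⬝ᵥ x) ≤ x ⬝ᵥ A *ᵥ x := by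
  set E := EuclideanSpace ℝ (Fin n)
  have hdot : ∀ x : E, (x : Fin n → ℝ) ⬝ᵥ (x : Fin n → ℝ) = ‖x‖ ^ 2 := by
    intro x
    rw [← real_inner_self_eq_norm_sq, PiLp.inner_apply]
    simp [dotProduct, RCLike.inner_apply, mul_comm, sq]
  have hf : Continuous fun x : E => (x : Fin n → ℝ) ⬝ᵥ A *ᵥ (x : Fin n → ℝ) := by
    have hc : Continuous fun x : E => (x : Fin n → ℝ) :=
      (PiLp.continuousLinearEquiv 2 ℝ (fun _ : Fin n => ℝ)).continuous
    have hg : Continuous fun v : Fin n → ℝ => v ⬝ᵥ A *ᵥ v := by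
      have : (fun v : Fin n → ℝ => v ⬝ᵥ A *ᵥ v)
          = fun v => ∑ i, v i * ∑ j, A i j * v j := by
        funext v; simp [dotProduct, mulVec]
      rw [this]
      exact continuous_finset_sum _ fun i _ =>
        (continuous_apply i).mul
          (continuous_finset_sum _ fun j _ => continuous_const.mul (continuous_apply j))
    exact hg.comp hc
  have hS : IsCompact (Metric.sphere (0:E) 1) := isCompact_sphere 0 1
  have hne : (Metric.sphere (0:E) 1).Nonempty := by
    refine ⟨EuclideanSpace.single ⟨0, hn⟩ (1:ℝ), ?_⟩
    rw [mem_sphere_iff_norm, sub_zero, EuclideanSpace.norm_single]; exact norm_one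
  obtain ⟨x₀, hx₀S, hmin⟩ := hS.exists_isMinOn hne hf.continuousOn
  have hx₀' : (x₀ : Fin n → ℝ) ≠ 0 := by
    intro h
    have h0 : x₀ = 0 := by ext i; exact congrFun h i
    have := Metric.mem_sphere.mp hx₀S
    rw [h0] at this; simp at this
  set c := (x₀ : Fin n → ℝ) ⬝ᵥ A *ᵥ (x₀ : Fin n → ℝ) with hc
  have hcpos : 0 < c := by
    have := hA.dotProduct_mulVec_pos hx₀'; simpa only [star_trivial] using this
  refine ⟨c, hcpos, fun x => ?_⟩
  by_cases hx : x = 0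
  · simp [hx]
  · set y : E := WithLp.toLp 2 x with hy
    have hy0 : y ≠ 0 := by
      intro h; exact hx (by ext i; exact congrFun (congrArg (fun v : E => (v : Fin n → ℝ)) h) i)
    have hny : 0 < ‖y‖ := norm_pos_iff.mpr hy0
    set u : E := ‖y‖⁻¹ • y with hu
    have huS : u ∈ Metric.sphere (0:E) 1 := by
      simp [hu, norm_smul, abs_of_pos (inv_pos.mpr hny), inv_mul_cancel₀ hny.ne']
    have hcu : c ≤ (u : Fin n → ℝ) ⬝ᵥ A *ᵥ (u : Fin n → ℝ) := hmin huS
    have hucoe : (u : Fin n → ℝ) = (‖y‖⁻¹ : ℝ) • x := rfl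
    have hquad : (u : Fin n → ℝ) ⬝ᵥ A *ᵥ (u : Fin n → ℝ)
        = ‖y‖⁻¹ * ‖y‖⁻¹ * (x ⬝ᵥ A *ᵥ x) := by
      rw [hucoe, mulVec_smul, smul_dotProduct, dotProduct_smul]
      simp [smul_eq_mul]; ring
    have hxy : x ⬝ᵥ x = ‖y‖ ^ 2 := hdot y
    rw [hquad] at hcu
    rw [hxy]
    show c * ‖y‖ ^ 2 ≤ x ⬝ᵥ A *ᵥ x
    have h1 : ‖y‖⁻¹ * ‖y‖ = 1 := inv_mul_cancel₀ hny.ne'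
    have h2 : ‖y‖⁻¹ * ‖y‖⁻¹ * (x ⬝ᵥ A *ᵥ x) * ‖y‖ ^ 2 = x ⬝ᵥ A *ᵥ x := by
      have : ‖y‖⁻¹ * ‖y‖⁻¹ * (x ⬝ᵥ A *ᵥ x) * ‖y‖ ^ 2
          = (x ⬝ᵥ A *ᵥ x) * ((‖y‖⁻¹ * ‖y‖) * (‖y‖⁻¹ * ‖y‖)) := by ring
      rw [this, h1]; ring
    have h3 := mul_le_mul_of_nonneg_right hcu (sq_nonneg ‖y‖)
    rw [h2] at h3
    linarith

lemma quad_upper (n : ℕ) (A : Matrix (Fin n) (Fin n) ℝ) :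
    ∃ C > (0:ℝ), ∀ x : Fin n → ℝ, x ⬝ᵥ A *ᵥ x ≤ C * (x ⬝ᵥ x) := by
  refine ⟨(∑ i, ∑ j, |A i j|) + 1, by positivity, fun x => ?_⟩
  have h1 : x ⬝ᵥ A *ᵥ x = ∑ i, ∑ j, A i j * x i * x j := by
    simp only [dotProduct, mulVec, Finset.mul_sum]
    exact Finset.sum_congr rfl fun i _ => Finset.sum_congr rfl fun j _ => by ring
  have h2 : ∀ i j : Fin n, A i j * x i * x j ≤ |A i j| * (x ⬝ᵥ x) := by
    intro i j
    have hi : x i * x i ≤ x ⬝ᵥ x :=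
      Finset.single_le_sum (f := fun k => x k * x k)
        (fun k _ => mul_self_nonneg (x k)) (Finset.mem_univ i)
    have hj : x j * x j ≤ x ⬝ᵥ x :=
      Finset.single_le_sum (f := fun k => x k * x k)
        (fun k _ => mul_self_nonneg (x k)) (Finset.mem_univ j)
    have habs : |x i * x j| ≤ x ⬝ᵥ x := by
      rw [abs_mul]
      nlinarith [abs_nonneg (x i), abs_nonneg (x j), sq_abs (x i), sq_abs (x j),
        sq_nonneg (|x i| - |x j|)]
    calc A i j * x i * x j ≤ |A i j * x i * x j| := le_abs_self _
      _ = |A i j| * |x i * x j| := by rw [mul_assoc, abs_mul]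
      _ ≤ |A i j| * (x ⬝ᵥ x) := mul_le_mul_of_nonneg_left habs (abs_nonneg _)
  calc x ⬝ᵥ A *ᵥ x = ∑ i, ∑ j, A i j * x i * x j := h1
    _ ≤ ∑ i, ∑ j, |A i j| * (x ⬝ᵥ x) :=
        Finset.sum_le_sum fun i _ => Finset.sum_le_sum fun j _ => h2 i j
    _ = (∑ i, ∑ j, |A i j|) * (x ⬝ᵥ x) := by simp [Finset.sum_mul]
    _ ≤ ((∑ i, ∑ j, |A i j|) + 1) * (x ⬝ᵥ x) := by
        have := dot_self_nonneg n x; nlinarith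

lemma inv_quad_bound {n : ℕ} {B : Matrix (Fin n) (Fin n) ℝ} (hB : B.PosDef) {m : ℝ}
    (hm : 0 < m) (h : ∀ x : Fin n → ℝ, m * (x ⬝ᵥ x) ≤ x ⬝ᵥ B *ᵥ x) :
    ∀ y : Fin n → ℝ, y ⬝ᵥ B⁻¹ *ᵥ y ≤ (1/m) * (y ⬝ᵥ y) := by
  intro y
  set z := B⁻¹ *ᵥ y with hz
  have hBz : B *ᵥ z = y := by
    rw [hz, mulVec_mulVec, mul_nonsing_inv _ (isUnit_iff_ne_zero.mpr hB.det_pos.ne'), one_mulVec]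
  have hyz : y ⬝ᵥ z = z ⬝ᵥ B *ᵥ z := by rw [← hBz, dotProduct_comm]
  have h0 : 0 ≤ y ⬝ᵥ z := by
    rw [hyz]
    exact le_trans (mul_nonneg hm.le (dot_self_nonneg n z)) (h z)
  have hcs : (y ⬝ᵥ z) ^ 2 ≤ (y ⬝ᵥ y) * (z ⬝ᵥ z) := dot_sq_le n y z
  have hmz : m * (z ⬝ᵥ z) ≤ y ⬝ᵥ z := by rw [hyz]; exact h z
  have goal : y ⬝ᵥ z ≤ (1/m) * (y ⬝ᵥ y) := by
    rcases eq_or_lt_of_le h0 with h0' | h0'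
    · rw [← h0']
      have := dot_self_nonneg n y
      positivity
    · rw [div_mul_eq_mul_div, le_div_iff₀ hm]
      nlinarith [dot_self_nonneg n z, dot_self_nonneg n y]
  exact goal

lemma dot_self_pos {n : ℕ} {x : Fin n → ℝ} (hx : x ≠ 0) : 0 < x ⬝ᵥ x := by
  rcases (dot_self_nonneg n x).eq_or_lt.imp Eq.symm id with h | h
  · exfalso; apply hx
    ext i
    have hi : x i * x i ≤ 0 := h ▸ Finset.single_le_sum
      (f := fun k => x k * x k) (fun k _ => mul_self_nonneg (x k)) (Finset.mem_univ i)
    have := mul_self_nonneg (x i)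
    have : x i * x i = 0 := le_antisymm hi this
    simpa using mul_self_eq_zero.mp this
  · exact h

theorem stmt_10 (n : ℕ) (hn : 1 ≤ n)
    (Kd Kp Hh Ch : Matrix (Fin n) (Fin n) ℝ)
    (hKd : Kd.PosDef) (hKp : Kp.PosDef) (hHh : Hh.PosDef) :
    ∃ ε₀ > (0:ℝ), ∀ ε : ℝ, 0 < ε → ε < ε₀ →
      (Kd - ε • Hh).PosDef ∧
      ∀ x : Fin n → ℝ, x ≠ 0 →
        x ⬝ᵥ (-(ε • Kp)
          + (ε ^ 2 / 4) • ((Kd - Chᵀ) * (Kd - ε • Hh)⁻¹ * (Kdᵀ - Ch))).mulVec x < 0 := by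
  obtain ⟨cd, hcd, hKdc⟩ := quad_coercive hn hKd
  obtain ⟨cp, hcp, hKpc⟩ := quad_coercive hn hKp
  obtain ⟨CH, hCH, hHb⟩ := quad_upper n Hh
  set M : Matrix (Fin n) (Fin n) ℝ := Kdᵀ - Ch with hM
  obtain ⟨CM, hCM, hMb⟩ := quad_upper n (Mᵀ * M)
  refine ⟨min (cd / (2 * CH)) (cp * cd / CM), lt_min (by positivity) (by positivity),
    fun ε hε hε₀ => ?_⟩
  have hε1 : ε < cd / (2 * CH) := lt_of_lt_of_le hε₀ (min_le_left _ _)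
  have hε2 : ε < cp * cd / CM := lt_of_lt_of_le hε₀ (min_le_right _ _)
  -- coercivity of B = Kd - ε • Hh
  set B : Matrix (Fin n) (Fin n) ℝ := Kd - ε • Hh with hB
  have hBc : ∀ x : Fin n → ℝ, (cd / 2) * (x ⬝ᵥ x) ≤ x ⬝ᵥ B *ᵥ x := by
    intro x
    have hquad : x ⬝ᵥ B *ᵥ x = x ⬝ᵥ Kd *ᵥ x - ε * (x ⬝ᵥ Hh *ᵥ x) := by
      rw [hB, sub_mulVec, dotProduct_sub, smul_mulVec, dotProduct_smul, smul_eq_mul]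
    have h1 := hKdc x
    have h2 := hHb x
    have hxx := dot_self_nonneg n x
    have hεCH : ε * CH ≤ cd / 2 := by
      have h := (lt_div_iff₀ (by positivity : (0:ℝ) < 2 * CH)).mp hε1
      nlinarith
    have h3 : ε * (x ⬝ᵥ Hh *ᵥ x) ≤ (cd / 2) * (x ⬝ᵥ x) := by
      calc ε * (x ⬝ᵥ Hh *ᵥ x) ≤ ε * (CH * (x ⬝ᵥ x)) := by
            exact mul_le_mul_of_nonneg_left h2 hε.le
        _ = (ε * CH) * (x ⬝ᵥ x) := by ring
        _ ≤ (cd / 2) * (x ⬝ᵥ x) := mul_le_mul_of_nonneg_right hεCH hxx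
    rw [hquad]; linarith
  have hBpd : B.PosDef := by
    refine Matrix.PosDef.of_dotProduct_mulVec_pos ?_ ?_
    · refine hKd.1.sub ?_
      unfold Matrix.IsHermitian
      rw [conjTranspose_smul, hHh.1]
      simp
    · intro x hx
      have := hBc x
      have := dot_self_pos hx
      simp only [star_trivial]
      have hpos : 0 < (cd / 2) * (x ⬝ᵥ x) := by positivity
      linarith [hBc x]
  refine ⟨hBpd, fun x hx => ?_⟩
  have hxx : 0 < x ⬝ᵥ x := dot_self_pos hx
  set y : Fin n → ℝ := M *ᵥ x with hy
  -- rewrite the quadratic form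
  have htr : Kd - Chᵀ = Mᵀ := by rw [hM, transpose_sub, transpose_transpose]
  have hsplit : x ⬝ᵥ (-(ε • Kp) + (ε ^ 2 / 4) • (Mᵀ * B⁻¹ * M)) *ᵥ x
      = -(ε * (x ⬝ᵥ Kp *ᵥ x)) + (ε ^ 2 / 4) * (x ⬝ᵥ (Mᵀ * B⁻¹ * M) *ᵥ x) := by
    rw [add_mulVec, dotProduct_add, neg_mulVec, dotProduct_neg, smul_mulVec,
      dotProduct_smul, smul_eq_mul, smul_mulVec, dotProduct_smul, smul_eq_mul]
  have hkey : x ⬝ᵥ (Mᵀ * B⁻¹ * M) *ᵥ x = y ⬝ᵥ B⁻¹ *ᵥ y := by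
    rw [hy, ← mulVec_mulVec, ← mulVec_mulVec, dotProduct_mulVec x Mᵀ, vecMul_transpose]
  have hinv := inv_quad_bound hBpd (by positivity : (0:ℝ) < cd / 2) hBc y
  have hyy : y ⬝ᵥ y ≤ CM * (x ⬝ᵥ x) := by
    have : y ⬝ᵥ y = x ⬝ᵥ (Mᵀ * M) *ᵥ x := by
      rw [hy, ← mulVec_mulVec, dotProduct_mulVec x Mᵀ, vecMul_transpose]
    rw [this]; exact hMb x
  have hq : x ⬝ᵥ (Mᵀ * B⁻¹ * M) *ᵥ x ≤ (2 / cd) * (CM * (x ⬝ᵥ x)) := by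
    rw [hkey]
    calc y ⬝ᵥ B⁻¹ *ᵥ y ≤ (1 / (cd / 2)) * (y ⬝ᵥ y) := hinv
      _ = (2 / cd) * (y ⬝ᵥ y) := by rw [one_div, inv_div]
      _ ≤ (2 / cd) * (CM * (x ⬝ᵥ x)) := by
          exact mul_le_mul_of_nonneg_left hyy (by positivity)
  have hKpx := hKpc x
  rw [htr, hsplit]
  have hfinal : (ε ^ 2 / 4) * ((2 / cd) * (CM * (x ⬝ᵥ x))) < ε * (cp * (x ⬝ᵥ x)) := by
    have hεCM : ε * CM < cp * cd := (lt_div_iff₀ hCM).mp hε2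
    have hL : ε ^ 2 / 4 * ((2 / cd) * (CM * (x ⬝ᵥ x)))
        = (ε * CM) * (ε * (x ⬝ᵥ x)) / (2 * cd) := by
      field_simp; ring
    rw [hL, div_lt_iff₀ (by positivity : (0:ℝ) < 2 * cd)]
    nlinarith [mul_lt_mul_of_pos_right hεCM (mul_pos hε hxx),
      mul_pos (mul_pos hcp hcd) (mul_pos hε hxx)]
  have h5 : (ε ^ 2 / 4) * (x ⬝ᵥ (Mᵀ * B⁻¹ * M) *ᵥ x) ≤ (ε ^ 2 / 4) * ((2 / cd) * (CM * (x ⬝ᵥ x))) :=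
    mul_le_mul_of_nonneg_left hq (by positivity)
  have h6 : ε * (cp * (x ⬝ᵥ x)) ≤ ε * (x ⬝ᵥ Kp *ᵥ x) := by
    exact mul_le_mul_of_nonneg_left (by linarith [hKpc x]) hε.le
  linarith
end

section
/- Let h₂, k_C, q̄, Δ̄ ≥ 0, k_{p1}, k_{d1}, k_{d2} > 0, ε₂ > 0, ε > 0, and set ρ = (1 + ε₂)(k_C q̄ + k_{d2}) / (2 k_{p1}), v₁ = −ε h₂ + k_{d1} − (ε ρ / 2)(k_C q̄ + k_{d2}), v₂ = k_{p1} ε₂ / (1 + ε₂). If v₁ > 0, then for all a, b ≥ 0: (ε h₂ − k_{d1}) a² − ε k_{p1} b² + ε (k_C a + k_C q̄ + k_{d2}) a b + (a + ε b) Δ̄ ≤ −(3/4) v₁ a² − (3/4) ε v₂ b² + ε k_C a² b + Δ̄²/v₁ + ε Δ̄²/v₂. -/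
theorem stmt_13 (h2 kC qbar Δ kp1 kd1 kd2 ε₂ ε : ℝ)
    (hh2 : 0 ≤ h2) (hkC : 0 ≤ kC) (hqbar : 0 ≤ qbar) (hΔ : 0 ≤ Δ)
    (hkp1 : 0 < kp1) (hkd1 : 0 < kd1) (hkd2 : 0 < kd2) (hε₂ : 0 < ε₂) (hε : 0 < ε)
    (ρ v₁ v₂ : ℝ)
    (hρ : ρ = (1 + ε₂) * (kC * qbar + kd2) / (2 * kp1))
    (hv₁ : v₁ = -ε * h2 + kd1 - (ε * ρ / 2) * (kC * qbar + kd2))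
    (hv₂ : v₂ = kp1 * ε₂ / (1 + ε₂))
    (hv₁pos : 0 < v₁) :
    ∀ a b : ℝ, 0 ≤ a → 0 ≤ b →
      (ε * h2 - kd1) * a ^ 2 - ε * kp1 * b ^ 2
          + ε * (kC * a + kC * qbar + kd2) * a * b + (a + ε * b) * Δ
        ≤ -(3 / 4) * v₁ * a ^ 2 - (3 / 4) * ε * v₂ * b ^ 2 + ε * kC * a ^ 2 * b
          + Δ ^ 2 / v₁ + ε * Δ ^ 2 / v₂ := by
  intro a b ha hb
  have hc : 0 < kC * qbar + kd2 := by positivity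
  have h1ε₂ : 0 < 1 + ε₂ := by linarith
  have hρpos : 0 < ρ := by rw [hρ]; positivity
  have hv₂pos : 0 < v₂ := by rw [hv₂]; positivity
  have hd1 : v₁ * (Δ ^ 2 / v₁) = Δ ^ 2 := mul_div_cancel₀ _ hv₁pos.ne'
  have hd2 : v₂ * (Δ ^ 2 / v₂) = Δ ^ 2 := mul_div_cancel₀ _ hv₂pos.ne'
  -- Young inequalities
  have hy1 : a * Δ ≤ v₁ / 4 * a ^ 2 + Δ ^ 2 / v₁ := by
    have h : v₁ * (a * Δ) ≤ v₁ * (v₁ / 4 * a ^ 2 + Δ ^ 2 / v₁) := by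
      nlinarith [sq_nonneg (v₁ * a - 2 * Δ), hd1]
    exact le_of_mul_le_mul_left h hv₁pos
  have hy2 : b * Δ ≤ v₂ / 4 * b ^ 2 + Δ ^ 2 / v₂ := by
    have h : v₂ * (b * Δ) ≤ v₂ * (v₂ / 4 * b ^ 2 + Δ ^ 2 / v₂) := by
      nlinarith [sq_nonneg (v₂ * b - 2 * Δ), hd2]
    exact le_of_mul_le_mul_left h hv₂pos
  have hy3 : a * b ≤ ρ / 2 * a ^ 2 + 1 / (2 * ρ) * b ^ 2 := by
    have hinv : (2 * ρ) * (1 / (2 * ρ)) = 1 := by field_simp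
    have h : (2 * ρ) * (a * b) ≤ (2 * ρ) * (ρ / 2 * a ^ 2 + 1 / (2 * ρ) * b ^ 2) := by
      nlinarith [sq_nonneg (ρ * a - b), hinv]
    exact le_of_mul_le_mul_left h (by positivity)
  -- key algebraic identities
  have hkp1v₂ : kp1 - kp1 / (1 + ε₂) = v₂ := by
    rw [hv₂]; field_simp; ring
  have hb2 : ε * (kp1 / (1 + ε₂)) * b ^ 2 = ε * kp1 * b ^ 2 - ε * v₂ * b ^ 2 := by
    rw [← hkp1v₂]; ring
  have hcρ : (kC * qbar + kd2) * (1 / (2 * ρ)) = kp1 / (1 + ε₂) := by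
    rw [hρ]; field_simp
  have key : ε * (kC * qbar + kd2) * (a * b)
      ≤ ε * (ρ / 2 * (kC * qbar + kd2)) * a ^ 2 + ε * (kp1 / (1 + ε₂)) * b ^ 2 := by
    have h := mul_le_mul_of_nonneg_left hy3 (by positivity : (0:ℝ) ≤ ε * (kC * qbar + kd2))
    calc ε * (kC * qbar + kd2) * (a * b)
        ≤ ε * (kC * qbar + kd2) * (ρ / 2 * a ^ 2 + 1 / (2 * ρ) * b ^ 2) := h
      _ = ε * (ρ / 2 * (kC * qbar + kd2)) * a ^ 2
          + ε * ((kC * qbar + kd2) * (1 / (2 * ρ))) * b ^ 2 := by ring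
      _ = ε * (ρ / 2 * (kC * qbar + kd2)) * a ^ 2 + ε * (kp1 / (1 + ε₂)) * b ^ 2 := by
          rw [hcρ]
  have hεh2 : ε * h2 - kd1 = -v₁ - ε * ρ / 2 * (kC * qbar + kd2) := by
    rw [hv₁]; ring
  have hy2e := mul_le_mul_of_nonneg_left hy2 hε.le
  rw [hεh2]
  set d1 := Δ ^ 2 / v₁ with hdd1
  set d2 := Δ ^ 2 / v₂ with hdd2
  set K := kp1 / (1 + ε₂) with hK
  have expand : ε * (kC * a + kC * qbar + kd2) * a * b
      = ε * kC * a ^ 2 * b + ε * (kC * qbar + kd2) * (a * b) := by ring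
  have expand2 : (a + ε * b) * Δ = a * Δ + ε * (b * Δ) := by ring
  rw [expand, expand2]
  have hεd2 : ε * Δ ^ 2 / v₂ = ε * d2 := by rw [hdd2]; ring
  linarith [key, hy1, hy2e, hb2, hεd2]
end

section
/- Let v₁, v₂, k_C, h₂, k_{p2}, B ≥ 0, ε > 0, with max{ε h₂ + k_{p2}, (1 + ε) h₂} > 0 and v₁ − (4/3) ε k_C B ≥ 0, and set ξ = (2/3) · min{ε v₂, v₁ − (4/3) ε k_C B} / max{ε h₂ + k_{p2}, (1 + ε) h₂}. Then for all a ≥ 0 and all b with 0 ≤ b ≤ B: −(3/4) v₁ a² − (3/4) ε v₂ b² + ε k_C a² b ≤ −ξ · (1/2) max{ε h₂ + k_{p2}, (1 + ε) h₂} (a² + b²). -/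
theorem stmt_14 (v₁ v₂ kC h2 kp2 B ε : ℝ)
    (hv₁ : 0 ≤ v₁) (hv₂ : 0 ≤ v₂) (hkC : 0 ≤ kC) (hh2 : 0 ≤ h2) (hkp2 : 0 ≤ kp2)
    (hB : 0 ≤ B) (hε : 0 < ε)
    (hden : 0 < max (ε * h2 + kp2) ((1 + ε) * h2))
    (hnum : 0 ≤ v₁ - (4 / 3) * ε * kC * B)
    (ξ : ℝ)
    (hξ : ξ = (2 / 3) * min (ε * v₂) (v₁ - (4 / 3) * ε * kC * B)
      / max (ε * h2 + kp2) ((1 + ε) * h2)) :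
    ∀ a b : ℝ, 0 ≤ a → 0 ≤ b → b ≤ B →
      -(3 / 4) * v₁ * a ^ 2 - (3 / 4) * ε * v₂ * b ^ 2 + ε * kC * a ^ 2 * b
        ≤ -ξ * ((1 / 2) * max (ε * h2 + kp2) ((1 + ε) * h2) * (a ^ 2 + b ^ 2)) := by
  intro a b ha hb hbB
  set M := max (ε * h2 + kp2) ((1 + ε) * h2) with hM
  set m := min (ε * v₂) (v₁ - (4 / 3) * ε * kC * B) with hm
  have hrhs : -ξ * ((1 / 2) * M * (a ^ 2 + b ^ 2)) = -(1/3) * m * (a ^ 2 + b ^ 2) := by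
    rw [hξ]; field_simp
  rw [hrhs]
  have h1 : m ≤ ε * v₂ := min_le_left _ _
  have h2' : m ≤ v₁ - (4 / 3) * ε * kC * B := min_le_right _ _
  have hab : ε * kC * a ^ 2 * b ≤ ε * kC * a ^ 2 * B :=
    mul_le_mul_of_nonneg_left hbB (by positivity)
  nlinarith [mul_le_mul_of_nonneg_right h1 (sq_nonneg b),
    mul_le_mul_of_nonneg_right h2' (sq_nonneg a), sq_nonneg a, sq_nonneg b,
    mul_nonneg (mul_nonneg hε.le hkC) (mul_nonneg (sq_nonneg a) hB),
    mul_nonneg hnum (sq_nonneg a), hab,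
    mul_nonneg (mul_nonneg hε.le hv₂) (sq_nonneg b)]
end
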